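/- The closure Z* := Σ_{s=0}^{n−1} K(GK)^s (Boolean sum, n = min(n_u,n_y)) satisfies Z* G Z* ≤ Z*; that is, the finite Boolean geometric sum is quadratically invariant. -/
import Mathlib

/-- Boolean (OR/AND semiring) matrix multiplication. -/
noncomputable def bmul {a b c : ℕ} (X : Matrix (Fin a) (Fin b) Bool) (Y : Matrix (Fin b) (Fin c) Bool) :
    Matrix (Fin a) (Fin c) Bool :=
  fun i k => Finset.univ.sup fun j => X i j && Y j k

/-- Entrywise Boolean (OR) addition of matrices. -/
def badd {a b : ℕ} (X Y : Matrix (Fin a) (Fin b) Bool) : Matrix (Fin a) (Fin b) Bool :=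
  fun i j => X i j || Y i j

/-- The sequence Z_0 = K, Z_{m+1} = Z_m + Z_m G Z_m. -/
noncomputable def Zseq {nu ny : ℕ} (K : Matrix (Fin nu) (Fin ny) Bool) (G : Matrix (Fin ny) (Fin nu) Bool) :
    ℕ → Matrix (Fin nu) (Fin ny) Bool
  | 0 => K
  | m + 1 => badd (Zseq K G m) (bmul (bmul (Zseq K G m) G) (Zseq K G m))

/-- kterm K G s = K (G K)^s in the Boolean semiring. -/
noncomputable def kterm {nu ny : ℕ} (K : Matrix (Fin nu) (Fin ny) Bool) (G : Matrix (Fin ny) (Fin nu) Bool) :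
    ℕ → Matrix (Fin nu) (Fin ny) Bool
  | 0 => K
  | s + 1 => bmul (kterm K G s) (bmul G K)

/-- Boolean (OR) sum of the matrices f 0, ..., f (N-1). -/
noncomputable def bsum {a b : ℕ} (N : ℕ) (f : ℕ → Matrix (Fin a) (Fin b) Bool) :
    Matrix (Fin a) (Fin b) Bool :=
  fun i j => (Finset.range N).sup fun s => f s i j

/-- Number of nonzero (true) entries. -/
def ncount {a b : ℕ} (Z : Matrix (Fin a) (Fin b) Bool) : ℕ :=
  ∑ i : Fin a, ∑ j : Fin b, if Z i j then 1 else 0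

lemma sup_bool_iff {α} (s : Finset α) (f : α → Bool) : s.sup f = true ↔ ∃ a ∈ s, f a = true := by
  rw [← not_iff_not]
  have hb : (false : Bool) = ⊥ := rfl
  simp only [Bool.not_eq_true, hb, Finset.sup_eq_bot_iff]
  push_neg
  simp [← hb]

lemma bmul_iff {a b c : ℕ} (X : Matrix (Fin a) (Fin b) Bool) (Y : Matrix (Fin b) (Fin c) Bool)
    (i : Fin a) (k : Fin c) : bmul X Y i k = true ↔ ∃ j, X i j = true ∧ Y j k = true := by
  unfold bmul
  rw [sup_bool_iff]
  simp

/-- Alternating path of length m: K-edges u k → y k (k ≤ m) and G-edges y k → u (k+1) (k < m). -/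
def BPath {nu ny : ℕ} (K : Matrix (Fin nu) (Fin ny) Bool) (G : Matrix (Fin ny) (Fin nu) Bool)
    (m : ℕ) (i : Fin nu) (j : Fin ny) : Prop :=
  ∃ u : ℕ → Fin nu, ∃ y : ℕ → Fin ny, u 0 = i ∧ y m = j ∧
    (∀ k ≤ m, K (u k) (y k) = true) ∧ (∀ k < m, G (y k) (u (k+1)) = true)

lemma kterm_iff {nu ny : ℕ} (K : Matrix (Fin nu) (Fin ny) Bool) (G : Matrix (Fin ny) (Fin nu) Bool)
    (m : ℕ) (i : Fin nu) (j : Fin ny) : kterm K G m i j = true ↔ BPath K G m i j := by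
  induction m generalizing j with
  | zero =>
    constructor
    · intro h
      exact ⟨fun _ => i, fun _ => j, rfl, rfl, fun k _ => h, fun k hk => absurd hk (Nat.not_lt_zero k)⟩
    · rintro ⟨u, y, hu0, hym, hK, _⟩
      have := hK 0 le_rfl
      rwa [hu0, hym] at this
  | succ m ih =>
    show bmul (kterm K G m) (bmul G K) i j = true ↔ _
    rw [bmul_iff]
    constructor
    · rintro ⟨w, hw, hGK⟩
      rw [bmul_iff] at hGK
      obtain ⟨v, hG, hKv⟩ := hGK
      obtain ⟨u, y, hu0, hym, hK, hGe⟩ := (ih w).mp hw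
      refine ⟨fun k => if k ≤ m then u k else v, fun k => if k ≤ m then y k else j, ?_, ?_, ?_, ?_⟩
      · simp [Nat.zero_le]; exact hu0
      · simp
      · intro k hk
        by_cases h : k ≤ m
        · simpa [h] using hK k h
        · simp [h]; exact hKv
      · intro k hk
        by_cases h : k < m
        · simp [h.le, Nat.succ_le_of_lt h]; exact hGe k h
        · have hk' : k = m := by omega
          subst hk'
          simp [hym]; exact hG
    · rintro ⟨u, y, hu0, hym, hK, hGe⟩
      refine ⟨y m, (ih (y m)).mpr ⟨u, y, hu0, rfl, fun k hk => hK k (hk.trans (Nat.le_succ m)),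
        fun k hk => hGe k (hk.trans (Nat.lt_succ_self m))⟩, ?_⟩
      rw [bmul_iff]
      exact ⟨u (m+1), hGe m (Nat.lt_succ_self m), hym ▸ hK (m+1) le_rfl⟩

lemma path_concat {nu ny : ℕ} {K : Matrix (Fin nu) (Fin ny) Bool} {G : Matrix (Fin ny) (Fin nu) Bool}
    {s t : ℕ} {i : Fin nu} {y0 : Fin ny} {u0 : Fin nu} {j : Fin ny}
    (h1 : BPath K G s i y0) (hG : G y0 u0 = true) (h2 : BPath K G t u0 j) :
    BPath K G (s + t + 1) i j := by
  obtain ⟨u1, y1, hu1, hy1, hK1, hG1⟩ := h1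
  obtain ⟨u2, y2, hu2, hy2, hK2, hG2⟩ := h2
  refine ⟨fun k => if k ≤ s then u1 k else u2 (k - s - 1),
          fun k => if k ≤ s then y1 k else y2 (k - s - 1), ?_, ?_, ?_, ?_⟩
  · simp [Nat.zero_le]; exact hu1
  · have : ¬ (s + t + 1 ≤ s) := by omega
    simp [this]
    have : s + t + 1 - s - 1 = t := by omega
    rw [this]; exact hy2
  · intro k hk
    by_cases h : k ≤ s
    · simpa [h] using hK1 k h
    · simp [h]; exact hK2 (k - s - 1) (by omega)
  · intro k hk
    rcases lt_trichotomy k s with h | h | h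
    · simp [h.le, Nat.succ_le_of_lt h]; exact hG1 k h
    · subst h
      have h2 : ¬ (k + 1 ≤ k) := by omega
      simp only [le_refl, if_true, if_neg h2, show k + 1 - k - 1 = 0 from by omega, hy1, hu2]
      exact hG
    · have h1' : ¬ (k ≤ s) := by omega
      have h2' : ¬ (k + 1 ≤ s) := by omega
      simp [h1', h2']
      have : k + 1 - s - 1 = (k - s - 1) + 1 := by omega
      rw [this]
      exact hG2 (k - s - 1) (by omega)

/-- splice out a repeated u-node -/
lemma path_splice_u {nu ny : ℕ} {K : Matrix (Fin nu) (Fin ny) Bool} {G : Matrix (Fin ny) (Fin nu) Bool}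
    {m : ℕ} {i : Fin nu} {j : Fin ny} {u : ℕ → Fin nu} {y : ℕ → Fin ny}
    (hu0 : u 0 = i) (hym : y m = j) (hK : ∀ k ≤ m, K (u k) (y k) = true)
    (hG : ∀ k < m, G (y k) (u (k+1)) = true)
    {a b : ℕ} (hab : a < b) (hbm : b ≤ m) (heq : u a = u b) :
    BPath K G (m - (b - a)) i j := by
  set d := b - a with hd
  refine ⟨fun k => if k ≤ a then u k else u (k + d),
          fun k => if k < a then y k else y (k + d), ?_, ?_, ?_, ?_⟩
  · simp [Nat.zero_le]; exact hu0
  · by_cases h : m - d < a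
    · omega
    · simp [h]
      have : m - d + d = m := by omega
      rw [this]; exact hym
  · intro k hk
    rcases lt_trichotomy k a with h | h | h
    · simpa [h.le, h] using hK k (by omega)
    · subst h
      have hka : ¬ (k < k) := lt_irrefl k
      simp [hka]
      have : k + d = b := by omega
      rw [this, heq]
      exact hK b hbm
    · have h1 : ¬ (k ≤ a) := by omega
      simp [h1, not_lt_of_gt h]
      exact hK (k + d) (by omega)
  · intro k hk
    rcases lt_trichotomy k a with h | h | h
    · simp [h, Nat.succ_le_of_lt h]; exact hG k (by omega)
    · subst h
      have h1 : ¬ (k < k) := lt_irrefl k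
      have h2 : ¬ (k + 1 ≤ k) := by omega
      simp only [if_neg h1, if_neg h2, show k + 1 + d = k + d + 1 from by omega]
      exact hG (k + d) (by omega)
    · have h1 : ¬ (k < a) := by omega
      have h2 : ¬ (k + 1 ≤ a) := by omega
      simp only [if_neg h1, if_neg h2, show k + 1 + d = k + d + 1 from by omega]
      exact hG (k + d) (by omega)

/-- splice out a repeated y-node -/
lemma path_splice_y {nu ny : ℕ} {K : Matrix (Fin nu) (Fin ny) Bool} {G : Matrix (Fin ny) (Fin nu) Bool}
    {m : ℕ} {i : Fin nu} {j : Fin ny} {u : ℕ → Fin nu} {y : ℕ → Fin ny}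
    (hu0 : u 0 = i) (hym : y m = j) (hK : ∀ k ≤ m, K (u k) (y k) = true)
    (hG : ∀ k < m, G (y k) (u (k+1)) = true)
    {a b : ℕ} (hab : a < b) (hbm : b ≤ m) (heq : y a = y b) :
    BPath K G (m - (b - a)) i j := by
  set d := b - a with hd
  refine ⟨fun k => if k ≤ a then u k else u (k + d),
          fun k => if k ≤ a then y k else y (k + d), ?_, ?_, ?_, ?_⟩
  · simp [Nat.zero_le]; exact hu0
  · by_cases h : m - d ≤ a
    · have e1 : m - d = a := by omega
      have e2 : b = m := by omega
      simp only [e1, le_refl, if_true, heq, e2, hym]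
    · simp [h]
      have : m - d + d = m := by omega
      rw [this]; exact hym
  · intro k hk
    by_cases h : k ≤ a
    · simpa [h] using hK k (by omega)
    · simp [h]
      exact hK (k + d) (by omega)
  · intro k hk
    rcases lt_trichotomy k a with h | h | h
    · simp [h.le, Nat.succ_le_of_lt h]; exact hG k (by omega)
    · subst h
      have h2 : ¬ (k + 1 ≤ k) := by omega
      simp only [le_refl, if_true, if_neg h2, heq, show k + 1 + d = b + 1 from by omega]
      exact hG b (by omega)
    · have h1 : ¬ (k ≤ a) := by omega
      have h2 : ¬ (k + 1 ≤ a) := by omega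
      simp only [if_neg h1, if_neg h2, show k + 1 + d = k + d + 1 from by omega]
      exact hG (k + d) (by omega)

lemma path_pump {nu ny : ℕ} {K : Matrix (Fin nu) (Fin ny) Bool} {G : Matrix (Fin ny) (Fin nu) Bool}
    (hn : 1 ≤ min nu ny) :
    ∀ m {i j}, BPath K G m i j → ∃ s < min nu ny, BPath K G s i j := by
  intro m
  induction m using Nat.strong_induction_on with
  | _ m ih =>
    intro i j hp
    by_cases hm : m < min nu ny
    · exact ⟨m, hm, hp⟩
    · push_neg at hm
      obtain ⟨u, y, hu0, hym, hK, hG⟩ := hp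
      -- find a repeat
      have hshort : ∃ a b, a < b ∧ b ≤ m ∧ BPath K G (m - (b - a)) i j := by
        by_cases hcase : nu ≤ ny
        · -- min = nu, pigeonhole on u over {0,...,m}, m+1 > nu
          have hcard : Fintype.card (Fin nu) < Fintype.card (Fin (m+1)) := by
            simp; omega
          obtain ⟨x, x', hne, heq⟩ :=
            Fintype.exists_ne_map_eq_of_card_lt (fun k : Fin (m+1) => u (k : ℕ)) hcard
          rcases Nat.lt_or_ge (x : ℕ) (x' : ℕ) with h | h
          · exact ⟨x, x', h, Nat.lt_succ_iff.mp x'.isLt,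
              path_splice_u hu0 hym hK hG h (Nat.lt_succ_iff.mp x'.isLt) heq⟩
          · have h' : (x' : ℕ) < (x : ℕ) := by
              rcases Nat.lt_or_ge (x' : ℕ) (x : ℕ) with h2 | h2
              · exact h2
              · exact absurd (Fin.ext (le_antisymm h2 h)) hne
            exact ⟨x', x, h', Nat.lt_succ_iff.mp x.isLt,
              path_splice_u hu0 hym hK hG h' (Nat.lt_succ_iff.mp x.isLt) heq.symm⟩
        · -- min = ny, pigeonhole on y over {0,...,m}
          push_neg at hcase
          have hcard : Fintype.card (Fin ny) < Fintype.card (Fin (m+1)) := by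
            simp; omega
          obtain ⟨x, x', hne, heq⟩ :=
            Fintype.exists_ne_map_eq_of_card_lt (fun k : Fin (m+1) => y (k : ℕ)) hcard
          rcases Nat.lt_or_ge (x : ℕ) (x' : ℕ) with h | h
          · exact ⟨x, x', h, Nat.lt_succ_iff.mp x'.isLt,
              path_splice_y hu0 hym hK hG h (Nat.lt_succ_iff.mp x'.isLt) heq⟩
          · have h' : (x' : ℕ) < (x : ℕ) := by
              rcases Nat.lt_or_ge (x' : ℕ) (x : ℕ) with h2 | h2
              · exact h2
              · exact absurd (Fin.ext (le_antisymm h2 h)) hne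
            exact ⟨x', x, h', Nat.lt_succ_iff.mp x.isLt,
              path_splice_y hu0 hym hK hG h' (Nat.lt_succ_iff.mp x.isLt) heq.symm⟩
      obtain ⟨a, b, hab, hbm, hp'⟩ := hshort
      exact ih (m - (b - a)) (by omega) hp'

theorem stmt9 {nu ny : ℕ} (K : Matrix (Fin nu) (Fin ny) Bool)
    (G : Matrix (Fin ny) (Fin nu) Bool) (hn : 1 ≤ min nu ny) :
    ∀ i j, bmul (bmul (bsum (min nu ny) (kterm K G)) G) (bsum (min nu ny) (kterm K G)) i j ≤
      bsum (min nu ny) (kterm K G) i j := by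
  intro i j
  set n := min nu ny
  -- Bool ≤: suffices LHS = true → RHS = true
  cases hL : bmul (bmul (bsum n (kterm K G)) G) (bsum n (kterm K G)) i j with
  | false => exact Bool.false_le _
  | true =>
    rw [bmul_iff] at hL
    obtain ⟨v, hZG, hZ2⟩ := hL
    rw [bmul_iff] at hZG
    obtain ⟨w, hZ1, hGe⟩ := hZG
    have hZ1' : ∃ s ∈ Finset.range n, kterm K G s i w = true := by
      rw [← sup_bool_iff]; exact hZ1
    have hZ2' : ∃ t ∈ Finset.range n, kterm K G t v j = true := by
      rw [← sup_bool_iff]; exact hZ2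
    obtain ⟨s, hs, hks⟩ := hZ1'
    obtain ⟨t, ht, hkt⟩ := hZ2'
    have hp1 : BPath K G s i w := (kterm_iff K G s i w).mp hks
    have hp2 : BPath K G t v j := (kterm_iff K G t v j).mp hkt
    have hcat : BPath K G (s + t + 1) i j := path_concat hp1 hGe hp2
    obtain ⟨s', hs', hp'⟩ := path_pump hn (s + t + 1) hcat
    have : bsum n (kterm K G) i j = true := by
      unfold bsum
      rw [sup_bool_iff]
      exact ⟨s', Finset.mem_range.mpr hs', (kterm_iff K G s' i j).mpr hp'⟩
    simp [this]
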